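/- The element Ω = Σ_{i=1}^{14} Xⁱ ⊗ X_i ∈ End(ℂ⁷) ⊗ End(ℂ⁷) satisfies Ω = 1 + P − 2Q − T. -/

import Mathlib

noncomputable section

open scoped TensorProduct

/-- The algebra of 7×7 complex matrices, `End (ℂ⁷)`. -/
abbrev M7 : Type := Matrix (Fin 7) (Fin 7) ℂ

/-- `i ↦ i' = 8 - i` in the 1-based labelling of the paper (0-based: `i ↦ 6 - i`). -/
def pr7 (i : Fin 7) : Fin 7 := ⟨6 - (i : ℕ), by omega⟩

/-- `f_{ij} = e_{ij} - e_{j'i'}`. -/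
def fml (i j : Fin 7) : M7 :=
  Matrix.single i j 1 - Matrix.single (pr7 j) (pr7 i) 1

/-- `√2` as a complex number. -/
def sq2 : ℂ := (Real.sqrt 2 : ℝ)

/-- The basis `X¹, …, X¹⁴` of the matrix Lie algebra of type `G₂` (0-based indices). -/
def XB : Fin 14 → M7 :=
  ![fml 0 0 - fml 1 1,
    fml 1 1 - fml 2 2,
    fml 0 1, fml 0 2, fml 1 0, fml 1 2, fml 2 0, fml 2 1,
    fml 0 3 - sq2⁻¹ • fml 4 1,
    fml 1 3 - sq2⁻¹ • fml 6 2,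
    fml 2 3 - sq2⁻¹ • fml 5 0,
    fml 3 0 - sq2⁻¹ • fml 1 4,
    fml 3 1 - sq2⁻¹ • fml 2 6,
    fml 3 2 - sq2⁻¹ • fml 0 5]

/-- The invariant bilinear form `⟨X, Y⟩ = (1/6) tr (XY)`. -/
def formG (X Y : M7) : ℂ := 6⁻¹ * (X * Y).trace

attribute [local instance] LieRing.ofAssociativeRing

/-- The simple Lie algebra of type `G₂`, realized as the Lie subalgebra of `gl₇(ℂ)`
generated (equivalently, spanned) by `X¹, …, X¹⁴`. -/
def g2 : LieSubalgebra ℂ M7 := LieSubalgebra.lieSpan ℂ M7 (Set.range XB)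

/-- `Xⁱ` as an element of `g₂`. -/
def XBg (i : Fin 14) : g2 := ⟨XB i, LieSubalgebra.subset_lieSpan (Set.mem_range_self i)⟩

/-- The coefficient function of the wedge `e_a ∧ e_b ∧ e_c ∈ (ℂ⁷)^{⊗3}`. -/
def w3 (a b c : Fin 7) : Fin 7 → Fin 7 → Fin 7 → ℂ := fun i j k =>
  (if (i, j, k) = (a, b, c) then 1 else 0) + (if (i, j, k) = (b, c, a) then 1 else 0)
    + (if (i, j, k) = (c, a, b) then 1 else 0) - (if (i, j, k) = (b, a, c) then 1 else 0)
    - (if (i, j, k) = (a, c, b) then 1 else 0) - (if (i, j, k) = (c, b, a) then 1 else 0)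

/-- The coefficients `β_{ijk}` of the invariant 3-form
`β = Σ_{i=1}^{3} e_i ∧ e₄ ∧ e_{i'} + √2 e₁∧e₂∧e₃ + √2 e₅∧e₆∧e₇` (1-based labels). -/
def betaC : Fin 7 → Fin 7 → Fin 7 → ℂ := fun i j k =>
  w3 0 3 6 i j k + w3 1 3 5 i j k + w3 2 3 4 i j k
    + sq2 * w3 0 1 2 i j k + sq2 * w3 4 5 6 i j k


open Kronecker in
/-- The operator `P = Σ e_{ij} ⊗ e_{ji}` on `ℂ⁷ ⊗ ℂ⁷`. -/
def PP : Matrix (Fin 7 × Fin 7) (Fin 7 × Fin 7) ℂ :=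
  ∑ i : Fin 7, ∑ j : Fin 7,
    Matrix.single i j (1 : ℂ) ⊗ₖ Matrix.single j i (1 : ℂ)

open Kronecker in
/-- The operator `Q = Σ e_{ij} ⊗ e_{i'j'}` on `ℂ⁷ ⊗ ℂ⁷`. -/
def QQ : Matrix (Fin 7 × Fin 7) (Fin 7 × Fin 7) ℂ :=
  ∑ i : Fin 7, ∑ j : Fin 7,
    Matrix.single i j (1 : ℂ) ⊗ₖ Matrix.single (pr7 i) (pr7 j) (1 : ℂ)

open Kronecker in
/-- The operator `T = Σ_{i,j,k,l,a} β_{ika} β_{jla} e_{ij} ⊗ e_{kl}` on `ℂ⁷ ⊗ ℂ⁷`. -/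
def TT : Matrix (Fin 7 × Fin 7) (Fin 7 × Fin 7) ℂ :=
  ∑ i : Fin 7, ∑ j : Fin 7, ∑ k : Fin 7, ∑ l : Fin 7,
    (∑ a : Fin 7, betaC i k a * betaC j l a) •
      (Matrix.single i j (1 : ℂ) ⊗ₖ Matrix.single k l (1 : ℂ))



structure Z2 where
  a : ℤ
  b : ℤ
deriving DecidableEq

namespace Z2
@[ext] theorem ext' {x y : Z2} (h1 : x.a = y.a) (h2 : x.b = y.b) : x = y := by
  cases x; cases y; simp_all

instance : Zero Z2 := ⟨⟨0,0⟩⟩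
instance : One Z2 := ⟨⟨1,0⟩⟩
instance : Add Z2 := ⟨fun x y => ⟨x.a+y.a, x.b+y.b⟩⟩
instance : Neg Z2 := ⟨fun x => ⟨-x.a, -x.b⟩⟩
instance : Mul Z2 := ⟨fun x y => ⟨x.a*y.a+2*x.b*y.b, x.a*y.b+x.b*y.a⟩⟩

@[simp] theorem zero_a : (0:Z2).a = 0 := rfl
@[simp] theorem zero_b : (0:Z2).b = 0 := rfl
@[simp] theorem one_a : (1:Z2).a = 1 := rfl
@[simp] theorem one_b : (1:Z2).b = 0 := rfl
@[simp] theorem add_a (x y : Z2) : (x+y).a = x.a+y.a := rfl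
@[simp] theorem add_b (x y : Z2) : (x+y).b = x.b+y.b := rfl
@[simp] theorem neg_a (x : Z2) : (-x).a = -x.a := rfl
@[simp] theorem neg_b (x : Z2) : (-x).b = -x.b := rfl
@[simp] theorem mul_a (x y : Z2) : (x*y).a = x.a*y.a+2*x.b*y.b := rfl
@[simp] theorem mul_b (x y : Z2) : (x*y).b = x.a*y.b+x.b*y.a := rfl

instance : CommRing Z2 where
  add_assoc x y z := by ext <;> simp <;> ring
  zero_add x := by ext <;> simp
  add_zero x := by ext <;> simp
  add_comm x y := by ext <;> simp <;> ring
  left_distrib x y z := by ext <;> simp <;> ring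
  right_distrib x y z := by ext <;> simp <;> ring
  zero_mul x := by ext <;> simp
  mul_zero x := by ext <;> simp
  mul_assoc x y z := by ext <;> simp <;> ring
  one_mul x := by ext <;> simp
  mul_one x := by ext <;> simp
  mul_comm x y := by ext <;> simp <;> ring
  neg_add_cancel x := by ext <;> simp
  nsmul := fun n x => ⟨n * x.a, n * x.b⟩
  nsmul_zero x := by ext <;> show _ * _ = _ <;> simp
  nsmul_succ n x := by ext <;> show _ * _ = _ * _ + _ <;> push_cast <;> ring
  zsmul := fun n x => ⟨n * x.a, n * x.b⟩
  zsmul_zero' x := by ext <;> show _ * _ = _ <;> simp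
  zsmul_succ' n x := by ext <;> show _ * _ = _ * _ + _ <;> simp <;> ring
  zsmul_neg' n x := by
    ext <;> show _ * _ = -(_ * _) <;> simp [Int.negSucc_eq] <;> ring

end Z2

namespace G2aux

abbrev M7z := Matrix (Fin 7) (Fin 7) Z2

def c2 : Z2 := ⟨2,0⟩
def c3 : Z2 := ⟨3,0⟩
def c4 : Z2 := ⟨4,0⟩
def c24 : Z2 := ⟨24,0⟩
def sq2z : Z2 := ⟨0,1⟩

def fmlz (i j : Fin 7) : M7z :=
  Matrix.single i j 1 - Matrix.single (pr7 j) (pr7 i) 1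

/-- `2 • XB`, over `Z2`, structurally. -/
def SXB : Fin 14 → M7z :=
  ![c2 • (fmlz 0 0 - fmlz 1 1),
    c2 • (fmlz 1 1 - fmlz 2 2),
    c2 • fmlz 0 1, c2 • fmlz 0 2, c2 • fmlz 1 0, c2 • fmlz 1 2, c2 • fmlz 2 0, c2 • fmlz 2 1,
    c2 • fmlz 0 3 - sq2z • fmlz 4 1,
    c2 • fmlz 1 3 - sq2z • fmlz 6 2,
    c2 • fmlz 2 3 - sq2z • fmlz 5 0,
    c2 • fmlz 3 0 - sq2z • fmlz 1 4,
    c2 • fmlz 3 1 - sq2z • fmlz 2 6,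
    c2 • fmlz 3 2 - sq2z • fmlz 0 5]

def w3z (a b c : Fin 7) : Fin 7 → Fin 7 → Fin 7 → Z2 := fun i j k =>
  (if (i, j, k) = (a, b, c) then 1 else 0) + (if (i, j, k) = (b, c, a) then 1 else 0)
    + (if (i, j, k) = (c, a, b) then 1 else 0) - (if (i, j, k) = (b, a, c) then 1 else 0)
    - (if (i, j, k) = (a, c, b) then 1 else 0) - (if (i, j, k) = (c, b, a) then 1 else 0)

def betaCz : Fin 7 → Fin 7 → Fin 7 → Z2 := fun i j k =>
  w3z 0 3 6 i j k + w3z 1 3 5 i j k + w3z 2 3 4 i j k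
    + sq2z * w3z 0 1 2 i j k + sq2z * w3z 4 5 6 i j k

def TSXB : Fin 14 → Fin 7 → Fin 7 → Z2 :=
  ![![![⟨2,0⟩, ⟨0,0⟩, ⟨0,0⟩, ⟨0,0⟩, ⟨0,0⟩, ⟨0,0⟩, ⟨0,0⟩],
    ![⟨0,0⟩, ⟨-2,0⟩, ⟨0,0⟩, ⟨0,0⟩, ⟨0,0⟩, ⟨0,0⟩, ⟨0,0⟩],
    ![⟨0,0⟩, ⟨0,0⟩, ⟨0,0⟩, ⟨0,0⟩, ⟨0,0⟩, ⟨0,0⟩, ⟨0,0⟩],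
    ![⟨0,0⟩, ⟨0,0⟩, ⟨0,0⟩, ⟨0,0⟩, ⟨0,0⟩, ⟨0,0⟩, ⟨0,0⟩],
    ![⟨0,0⟩, ⟨0,0⟩, ⟨0,0⟩, ⟨0,0⟩, ⟨0,0⟩, ⟨0,0⟩, ⟨0,0⟩],
    ![⟨0,0⟩, ⟨0,0⟩, ⟨0,0⟩, ⟨0,0⟩, ⟨0,0⟩, ⟨2,0⟩, ⟨0,0⟩],
    ![⟨0,0⟩, ⟨0,0⟩, ⟨0,0⟩, ⟨0,0⟩, ⟨0,0⟩, ⟨0,0⟩, ⟨-2,0⟩]],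
  ![![⟨0,0⟩, ⟨0,0⟩, ⟨0,0⟩, ⟨0,0⟩, ⟨0,0⟩, ⟨0,0⟩, ⟨0,0⟩],
    ![⟨0,0⟩, ⟨2,0⟩, ⟨0,0⟩, ⟨0,0⟩, ⟨0,0⟩, ⟨0,0⟩, ⟨0,0⟩],
    ![⟨0,0⟩, ⟨0,0⟩, ⟨-2,0⟩, ⟨0,0⟩, ⟨0,0⟩, ⟨0,0⟩, ⟨0,0⟩],
    ![⟨0,0⟩, ⟨0,0⟩, ⟨0,0⟩, ⟨0,0⟩, ⟨0,0⟩, ⟨0,0⟩, ⟨0,0⟩],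
    ![⟨0,0⟩, ⟨0,0⟩, ⟨0,0⟩, ⟨0,0⟩, ⟨2,0⟩, ⟨0,0⟩, ⟨0,0⟩],
    ![⟨0,0⟩, ⟨0,0⟩, ⟨0,0⟩, ⟨0,0⟩, ⟨0,0⟩, ⟨-2,0⟩, ⟨0,0⟩],
    ![⟨0,0⟩, ⟨0,0⟩, ⟨0,0⟩, ⟨0,0⟩, ⟨0,0⟩, ⟨0,0⟩, ⟨0,0⟩]],
  ![![⟨0,0⟩, ⟨2,0⟩, ⟨0,0⟩, ⟨0,0⟩, ⟨0,0⟩, ⟨0,0⟩, ⟨0,0⟩],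
    ![⟨0,0⟩, ⟨0,0⟩, ⟨0,0⟩, ⟨0,0⟩, ⟨0,0⟩, ⟨0,0⟩, ⟨0,0⟩],
    ![⟨0,0⟩, ⟨0,0⟩, ⟨0,0⟩, ⟨0,0⟩, ⟨0,0⟩, ⟨0,0⟩, ⟨0,0⟩],
    ![⟨0,0⟩, ⟨0,0⟩, ⟨0,0⟩, ⟨0,0⟩, ⟨0,0⟩, ⟨0,0⟩, ⟨0,0⟩],
    ![⟨0,0⟩, ⟨0,0⟩, ⟨0,0⟩, ⟨0,0⟩, ⟨0,0⟩, ⟨0,0⟩, ⟨0,0⟩],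
    ![⟨0,0⟩, ⟨0,0⟩, ⟨0,0⟩, ⟨0,0⟩, ⟨0,0⟩, ⟨0,0⟩, ⟨-2,0⟩],
    ![⟨0,0⟩, ⟨0,0⟩, ⟨0,0⟩, ⟨0,0⟩, ⟨0,0⟩, ⟨0,0⟩, ⟨0,0⟩]],
  ![![⟨0,0⟩, ⟨0,0⟩, ⟨2,0⟩, ⟨0,0⟩, ⟨0,0⟩, ⟨0,0⟩, ⟨0,0⟩],
    ![⟨0,0⟩, ⟨0,0⟩, ⟨0,0⟩, ⟨0,0⟩, ⟨0,0⟩, ⟨0,0⟩, ⟨0,0⟩],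
    ![⟨0,0⟩, ⟨0,0⟩, ⟨0,0⟩, ⟨0,0⟩, ⟨0,0⟩, ⟨0,0⟩, ⟨0,0⟩],
    ![⟨0,0⟩, ⟨0,0⟩, ⟨0,0⟩, ⟨0,0⟩, ⟨0,0⟩, ⟨0,0⟩, ⟨0,0⟩],
    ![⟨0,0⟩, ⟨0,0⟩, ⟨0,0⟩, ⟨0,0⟩, ⟨0,0⟩, ⟨0,0⟩, ⟨-2,0⟩],
    ![⟨0,0⟩, ⟨0,0⟩, ⟨0,0⟩, ⟨0,0⟩, ⟨0,0⟩, ⟨0,0⟩, ⟨0,0⟩],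
    ![⟨0,0⟩, ⟨0,0⟩, ⟨0,0⟩, ⟨0,0⟩, ⟨0,0⟩, ⟨0,0⟩, ⟨0,0⟩]],
  ![![⟨0,0⟩, ⟨0,0⟩, ⟨0,0⟩, ⟨0,0⟩, ⟨0,0⟩, ⟨0,0⟩, ⟨0,0⟩],
    ![⟨2,0⟩, ⟨0,0⟩, ⟨0,0⟩, ⟨0,0⟩, ⟨0,0⟩, ⟨0,0⟩, ⟨0,0⟩],
    ![⟨0,0⟩, ⟨0,0⟩, ⟨0,0⟩, ⟨0,0⟩, ⟨0,0⟩, ⟨0,0⟩, ⟨0,0⟩],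
    ![⟨0,0⟩, ⟨0,0⟩, ⟨0,0⟩, ⟨0,0⟩, ⟨0,0⟩, ⟨0,0⟩, ⟨0,0⟩],
    ![⟨0,0⟩, ⟨0,0⟩, ⟨0,0⟩, ⟨0,0⟩, ⟨0,0⟩, ⟨0,0⟩, ⟨0,0⟩],
    ![⟨0,0⟩, ⟨0,0⟩, ⟨0,0⟩, ⟨0,0⟩, ⟨0,0⟩, ⟨0,0⟩, ⟨0,0⟩],
    ![⟨0,0⟩, ⟨0,0⟩, ⟨0,0⟩, ⟨0,0⟩, ⟨0,0⟩, ⟨-2,0⟩, ⟨0,0⟩]],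
  ![![⟨0,0⟩, ⟨0,0⟩, ⟨0,0⟩, ⟨0,0⟩, ⟨0,0⟩, ⟨0,0⟩, ⟨0,0⟩],
    ![⟨0,0⟩, ⟨0,0⟩, ⟨2,0⟩, ⟨0,0⟩, ⟨0,0⟩, ⟨0,0⟩, ⟨0,0⟩],
    ![⟨0,0⟩, ⟨0,0⟩, ⟨0,0⟩, ⟨0,0⟩, ⟨0,0⟩, ⟨0,0⟩, ⟨0,0⟩],
    ![⟨0,0⟩, ⟨0,0⟩, ⟨0,0⟩, ⟨0,0⟩, ⟨0,0⟩, ⟨0,0⟩, ⟨0,0⟩],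
    ![⟨0,0⟩, ⟨0,0⟩, ⟨0,0⟩, ⟨0,0⟩, ⟨0,0⟩, ⟨-2,0⟩, ⟨0,0⟩],
    ![⟨0,0⟩, ⟨0,0⟩, ⟨0,0⟩, ⟨0,0⟩, ⟨0,0⟩, ⟨0,0⟩, ⟨0,0⟩],
    ![⟨0,0⟩, ⟨0,0⟩, ⟨0,0⟩, ⟨0,0⟩, ⟨0,0⟩, ⟨0,0⟩, ⟨0,0⟩]],
  ![![⟨0,0⟩, ⟨0,0⟩, ⟨0,0⟩, ⟨0,0⟩, ⟨0,0⟩, ⟨0,0⟩, ⟨0,0⟩],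
    ![⟨0,0⟩, ⟨0,0⟩, ⟨0,0⟩, ⟨0,0⟩, ⟨0,0⟩, ⟨0,0⟩, ⟨0,0⟩],
    ![⟨2,0⟩, ⟨0,0⟩, ⟨0,0⟩, ⟨0,0⟩, ⟨0,0⟩, ⟨0,0⟩, ⟨0,0⟩],
    ![⟨0,0⟩, ⟨0,0⟩, ⟨0,0⟩, ⟨0,0⟩, ⟨0,0⟩, ⟨0,0⟩, ⟨0,0⟩],
    ![⟨0,0⟩, ⟨0,0⟩, ⟨0,0⟩, ⟨0,0⟩, ⟨0,0⟩, ⟨0,0⟩, ⟨0,0⟩],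
    ![⟨0,0⟩, ⟨0,0⟩, ⟨0,0⟩, ⟨0,0⟩, ⟨0,0⟩, ⟨0,0⟩, ⟨0,0⟩],
    ![⟨0,0⟩, ⟨0,0⟩, ⟨0,0⟩, ⟨0,0⟩, ⟨-2,0⟩, ⟨0,0⟩, ⟨0,0⟩]],
  ![![⟨0,0⟩, ⟨0,0⟩, ⟨0,0⟩, ⟨0,0⟩, ⟨0,0⟩, ⟨0,0⟩, ⟨0,0⟩],
    ![⟨0,0⟩, ⟨0,0⟩, ⟨0,0⟩, ⟨0,0⟩, ⟨0,0⟩, ⟨0,0⟩, ⟨0,0⟩],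
    ![⟨0,0⟩, ⟨2,0⟩, ⟨0,0⟩, ⟨0,0⟩, ⟨0,0⟩, ⟨0,0⟩, ⟨0,0⟩],
    ![⟨0,0⟩, ⟨0,0⟩, ⟨0,0⟩, ⟨0,0⟩, ⟨0,0⟩, ⟨0,0⟩, ⟨0,0⟩],
    ![⟨0,0⟩, ⟨0,0⟩, ⟨0,0⟩, ⟨0,0⟩, ⟨0,0⟩, ⟨0,0⟩, ⟨0,0⟩],
    ![⟨0,0⟩, ⟨0,0⟩, ⟨0,0⟩, ⟨0,0⟩, ⟨-2,0⟩, ⟨0,0⟩, ⟨0,0⟩],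
    ![⟨0,0⟩, ⟨0,0⟩, ⟨0,0⟩, ⟨0,0⟩, ⟨0,0⟩, ⟨0,0⟩, ⟨0,0⟩]],
  ![![⟨0,0⟩, ⟨0,0⟩, ⟨0,0⟩, ⟨2,0⟩, ⟨0,0⟩, ⟨0,0⟩, ⟨0,0⟩],
    ![⟨0,0⟩, ⟨0,0⟩, ⟨0,0⟩, ⟨0,0⟩, ⟨0,0⟩, ⟨0,0⟩, ⟨0,0⟩],
    ![⟨0,0⟩, ⟨0,0⟩, ⟨0,0⟩, ⟨0,0⟩, ⟨0,0⟩, ⟨0,0⟩, ⟨0,0⟩],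
    ![⟨0,0⟩, ⟨0,0⟩, ⟨0,0⟩, ⟨0,0⟩, ⟨0,0⟩, ⟨0,0⟩, ⟨-2,0⟩],
    ![⟨0,0⟩, ⟨0,-1⟩, ⟨0,0⟩, ⟨0,0⟩, ⟨0,0⟩, ⟨0,0⟩, ⟨0,0⟩],
    ![⟨0,0⟩, ⟨0,0⟩, ⟨0,1⟩, ⟨0,0⟩, ⟨0,0⟩, ⟨0,0⟩, ⟨0,0⟩],
    ![⟨0,0⟩, ⟨0,0⟩, ⟨0,0⟩, ⟨0,0⟩, ⟨0,0⟩, ⟨0,0⟩, ⟨0,0⟩]],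
  ![![⟨0,0⟩, ⟨0,0⟩, ⟨0,0⟩, ⟨0,0⟩, ⟨0,0⟩, ⟨0,0⟩, ⟨0,0⟩],
    ![⟨0,0⟩, ⟨0,0⟩, ⟨0,0⟩, ⟨2,0⟩, ⟨0,0⟩, ⟨0,0⟩, ⟨0,0⟩],
    ![⟨0,0⟩, ⟨0,0⟩, ⟨0,0⟩, ⟨0,0⟩, ⟨0,0⟩, ⟨0,0⟩, ⟨0,0⟩],
    ![⟨0,0⟩, ⟨0,0⟩, ⟨0,0⟩, ⟨0,0⟩, ⟨0,0⟩, ⟨-2,0⟩, ⟨0,0⟩],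
    ![⟨0,1⟩, ⟨0,0⟩, ⟨0,0⟩, ⟨0,0⟩, ⟨0,0⟩, ⟨0,0⟩, ⟨0,0⟩],
    ![⟨0,0⟩, ⟨0,0⟩, ⟨0,0⟩, ⟨0,0⟩, ⟨0,0⟩, ⟨0,0⟩, ⟨0,0⟩],
    ![⟨0,0⟩, ⟨0,0⟩, ⟨0,-1⟩, ⟨0,0⟩, ⟨0,0⟩, ⟨0,0⟩, ⟨0,0⟩]],
  ![![⟨0,0⟩, ⟨0,0⟩, ⟨0,0⟩, ⟨0,0⟩, ⟨0,0⟩, ⟨0,0⟩, ⟨0,0⟩],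
    ![⟨0,0⟩, ⟨0,0⟩, ⟨0,0⟩, ⟨0,0⟩, ⟨0,0⟩, ⟨0,0⟩, ⟨0,0⟩],
    ![⟨0,0⟩, ⟨0,0⟩, ⟨0,0⟩, ⟨2,0⟩, ⟨0,0⟩, ⟨0,0⟩, ⟨0,0⟩],
    ![⟨0,0⟩, ⟨0,0⟩, ⟨0,0⟩, ⟨0,0⟩, ⟨-2,0⟩, ⟨0,0⟩, ⟨0,0⟩],
    ![⟨0,0⟩, ⟨0,0⟩, ⟨0,0⟩, ⟨0,0⟩, ⟨0,0⟩, ⟨0,0⟩, ⟨0,0⟩],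
    ![⟨0,-1⟩, ⟨0,0⟩, ⟨0,0⟩, ⟨0,0⟩, ⟨0,0⟩, ⟨0,0⟩, ⟨0,0⟩],
    ![⟨0,0⟩, ⟨0,1⟩, ⟨0,0⟩, ⟨0,0⟩, ⟨0,0⟩, ⟨0,0⟩, ⟨0,0⟩]],
  ![![⟨0,0⟩, ⟨0,0⟩, ⟨0,0⟩, ⟨0,0⟩, ⟨0,0⟩, ⟨0,0⟩, ⟨0,0⟩],
    ![⟨0,0⟩, ⟨0,0⟩, ⟨0,0⟩, ⟨0,0⟩, ⟨0,-1⟩, ⟨0,0⟩, ⟨0,0⟩],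
    ![⟨0,0⟩, ⟨0,0⟩, ⟨0,0⟩, ⟨0,0⟩, ⟨0,0⟩, ⟨0,1⟩, ⟨0,0⟩],
    ![⟨2,0⟩, ⟨0,0⟩, ⟨0,0⟩, ⟨0,0⟩, ⟨0,0⟩, ⟨0,0⟩, ⟨0,0⟩],
    ![⟨0,0⟩, ⟨0,0⟩, ⟨0,0⟩, ⟨0,0⟩, ⟨0,0⟩, ⟨0,0⟩, ⟨0,0⟩],
    ![⟨0,0⟩, ⟨0,0⟩, ⟨0,0⟩, ⟨0,0⟩, ⟨0,0⟩, ⟨0,0⟩, ⟨0,0⟩],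
    ![⟨0,0⟩, ⟨0,0⟩, ⟨0,0⟩, ⟨-2,0⟩, ⟨0,0⟩, ⟨0,0⟩, ⟨0,0⟩]],
  ![![⟨0,0⟩, ⟨0,0⟩, ⟨0,0⟩, ⟨0,0⟩, ⟨0,1⟩, ⟨0,0⟩, ⟨0,0⟩],
    ![⟨0,0⟩, ⟨0,0⟩, ⟨0,0⟩, ⟨0,0⟩, ⟨0,0⟩, ⟨0,0⟩, ⟨0,0⟩],
    ![⟨0,0⟩, ⟨0,0⟩, ⟨0,0⟩, ⟨0,0⟩, ⟨0,0⟩, ⟨0,0⟩, ⟨0,-1⟩],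
    ![⟨0,0⟩, ⟨2,0⟩, ⟨0,0⟩, ⟨0,0⟩, ⟨0,0⟩, ⟨0,0⟩, ⟨0,0⟩],
    ![⟨0,0⟩, ⟨0,0⟩, ⟨0,0⟩, ⟨0,0⟩, ⟨0,0⟩, ⟨0,0⟩, ⟨0,0⟩],
    ![⟨0,0⟩, ⟨0,0⟩, ⟨0,0⟩, ⟨-2,0⟩, ⟨0,0⟩, ⟨0,0⟩, ⟨0,0⟩],
    ![⟨0,0⟩, ⟨0,0⟩, ⟨0,0⟩, ⟨0,0⟩, ⟨0,0⟩, ⟨0,0⟩, ⟨0,0⟩]],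
  ![![⟨0,0⟩, ⟨0,0⟩, ⟨0,0⟩, ⟨0,0⟩, ⟨0,0⟩, ⟨0,-1⟩, ⟨0,0⟩],
    ![⟨0,0⟩, ⟨0,0⟩, ⟨0,0⟩, ⟨0,0⟩, ⟨0,0⟩, ⟨0,0⟩, ⟨0,1⟩],
    ![⟨0,0⟩, ⟨0,0⟩, ⟨0,0⟩, ⟨0,0⟩, ⟨0,0⟩, ⟨0,0⟩, ⟨0,0⟩],
    ![⟨0,0⟩, ⟨0,0⟩, ⟨2,0⟩, ⟨0,0⟩, ⟨0,0⟩, ⟨0,0⟩, ⟨0,0⟩],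
    ![⟨0,0⟩, ⟨0,0⟩, ⟨0,0⟩, ⟨-2,0⟩, ⟨0,0⟩, ⟨0,0⟩, ⟨0,0⟩],
    ![⟨0,0⟩, ⟨0,0⟩, ⟨0,0⟩, ⟨0,0⟩, ⟨0,0⟩, ⟨0,0⟩, ⟨0,0⟩],
    ![⟨0,0⟩, ⟨0,0⟩, ⟨0,0⟩, ⟨0,0⟩, ⟨0,0⟩, ⟨0,0⟩, ⟨0,0⟩]]]

def TSXD : Fin 14 → Fin 7 → Fin 7 → Z2 :=
  ![![![⟨4,0⟩, ⟨0,0⟩, ⟨0,0⟩, ⟨0,0⟩, ⟨0,0⟩, ⟨0,0⟩, ⟨0,0⟩],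
    ![⟨0,0⟩, ⟨-2,0⟩, ⟨0,0⟩, ⟨0,0⟩, ⟨0,0⟩, ⟨0,0⟩, ⟨0,0⟩],
    ![⟨0,0⟩, ⟨0,0⟩, ⟨-2,0⟩, ⟨0,0⟩, ⟨0,0⟩, ⟨0,0⟩, ⟨0,0⟩],
    ![⟨0,0⟩, ⟨0,0⟩, ⟨0,0⟩, ⟨0,0⟩, ⟨0,0⟩, ⟨0,0⟩, ⟨0,0⟩],
    ![⟨0,0⟩, ⟨0,0⟩, ⟨0,0⟩, ⟨0,0⟩, ⟨2,0⟩, ⟨0,0⟩, ⟨0,0⟩],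
    ![⟨0,0⟩, ⟨0,0⟩, ⟨0,0⟩, ⟨0,0⟩, ⟨0,0⟩, ⟨2,0⟩, ⟨0,0⟩],
    ![⟨0,0⟩, ⟨0,0⟩, ⟨0,0⟩, ⟨0,0⟩, ⟨0,0⟩, ⟨0,0⟩, ⟨-4,0⟩]],
  ![![⟨2,0⟩, ⟨0,0⟩, ⟨0,0⟩, ⟨0,0⟩, ⟨0,0⟩, ⟨0,0⟩, ⟨0,0⟩],
    ![⟨0,0⟩, ⟨2,0⟩, ⟨0,0⟩, ⟨0,0⟩, ⟨0,0⟩, ⟨0,0⟩, ⟨0,0⟩],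
    ![⟨0,0⟩, ⟨0,0⟩, ⟨-4,0⟩, ⟨0,0⟩, ⟨0,0⟩, ⟨0,0⟩, ⟨0,0⟩],
    ![⟨0,0⟩, ⟨0,0⟩, ⟨0,0⟩, ⟨0,0⟩, ⟨0,0⟩, ⟨0,0⟩, ⟨0,0⟩],
    ![⟨0,0⟩, ⟨0,0⟩, ⟨0,0⟩, ⟨0,0⟩, ⟨4,0⟩, ⟨0,0⟩, ⟨0,0⟩],
    ![⟨0,0⟩, ⟨0,0⟩, ⟨0,0⟩, ⟨0,0⟩, ⟨0,0⟩, ⟨-2,0⟩, ⟨0,0⟩],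
    ![⟨0,0⟩, ⟨0,0⟩, ⟨0,0⟩, ⟨0,0⟩, ⟨0,0⟩, ⟨0,0⟩, ⟨-2,0⟩]],
  ![![⟨0,0⟩, ⟨0,0⟩, ⟨0,0⟩, ⟨0,0⟩, ⟨0,0⟩, ⟨0,0⟩, ⟨0,0⟩],
    ![⟨6,0⟩, ⟨0,0⟩, ⟨0,0⟩, ⟨0,0⟩, ⟨0,0⟩, ⟨0,0⟩, ⟨0,0⟩],
    ![⟨0,0⟩, ⟨0,0⟩, ⟨0,0⟩, ⟨0,0⟩, ⟨0,0⟩, ⟨0,0⟩, ⟨0,0⟩],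
    ![⟨0,0⟩, ⟨0,0⟩, ⟨0,0⟩, ⟨0,0⟩, ⟨0,0⟩, ⟨0,0⟩, ⟨0,0⟩],
    ![⟨0,0⟩, ⟨0,0⟩, ⟨0,0⟩, ⟨0,0⟩, ⟨0,0⟩, ⟨0,0⟩, ⟨0,0⟩],
    ![⟨0,0⟩, ⟨0,0⟩, ⟨0,0⟩, ⟨0,0⟩, ⟨0,0⟩, ⟨0,0⟩, ⟨0,0⟩],
    ![⟨0,0⟩, ⟨0,0⟩, ⟨0,0⟩, ⟨0,0⟩, ⟨0,0⟩, ⟨-6,0⟩, ⟨0,0⟩]],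
  ![![⟨0,0⟩, ⟨0,0⟩, ⟨0,0⟩, ⟨0,0⟩, ⟨0,0⟩, ⟨0,0⟩, ⟨0,0⟩],
    ![⟨0,0⟩, ⟨0,0⟩, ⟨0,0⟩, ⟨0,0⟩, ⟨0,0⟩, ⟨0,0⟩, ⟨0,0⟩],
    ![⟨6,0⟩, ⟨0,0⟩, ⟨0,0⟩, ⟨0,0⟩, ⟨0,0⟩, ⟨0,0⟩, ⟨0,0⟩],
    ![⟨0,0⟩, ⟨0,0⟩, ⟨0,0⟩, ⟨0,0⟩, ⟨0,0⟩, ⟨0,0⟩, ⟨0,0⟩],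
    ![⟨0,0⟩, ⟨0,0⟩, ⟨0,0⟩, ⟨0,0⟩, ⟨0,0⟩, ⟨0,0⟩, ⟨0,0⟩],
    ![⟨0,0⟩, ⟨0,0⟩, ⟨0,0⟩, ⟨0,0⟩, ⟨0,0⟩, ⟨0,0⟩, ⟨0,0⟩],
    ![⟨0,0⟩, ⟨0,0⟩, ⟨0,0⟩, ⟨0,0⟩, ⟨-6,0⟩, ⟨0,0⟩, ⟨0,0⟩]],
  ![![⟨0,0⟩, ⟨6,0⟩, ⟨0,0⟩, ⟨0,0⟩, ⟨0,0⟩, ⟨0,0⟩, ⟨0,0⟩],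
    ![⟨0,0⟩, ⟨0,0⟩, ⟨0,0⟩, ⟨0,0⟩, ⟨0,0⟩, ⟨0,0⟩, ⟨0,0⟩],
    ![⟨0,0⟩, ⟨0,0⟩, ⟨0,0⟩, ⟨0,0⟩, ⟨0,0⟩, ⟨0,0⟩, ⟨0,0⟩],
    ![⟨0,0⟩, ⟨0,0⟩, ⟨0,0⟩, ⟨0,0⟩, ⟨0,0⟩, ⟨0,0⟩, ⟨0,0⟩],
    ![⟨0,0⟩, ⟨0,0⟩, ⟨0,0⟩, ⟨0,0⟩, ⟨0,0⟩, ⟨0,0⟩, ⟨0,0⟩],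
    ![⟨0,0⟩, ⟨0,0⟩, ⟨0,0⟩, ⟨0,0⟩, ⟨0,0⟩, ⟨0,0⟩, ⟨-6,0⟩],
    ![⟨0,0⟩, ⟨0,0⟩, ⟨0,0⟩, ⟨0,0⟩, ⟨0,0⟩, ⟨0,0⟩, ⟨0,0⟩]],
  ![![⟨0,0⟩, ⟨0,0⟩, ⟨0,0⟩, ⟨0,0⟩, ⟨0,0⟩, ⟨0,0⟩, ⟨0,0⟩],
    ![⟨0,0⟩, ⟨0,0⟩, ⟨0,0⟩, ⟨0,0⟩, ⟨0,0⟩, ⟨0,0⟩, ⟨0,0⟩],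
    ![⟨0,0⟩, ⟨6,0⟩, ⟨0,0⟩, ⟨0,0⟩, ⟨0,0⟩, ⟨0,0⟩, ⟨0,0⟩],
    ![⟨0,0⟩, ⟨0,0⟩, ⟨0,0⟩, ⟨0,0⟩, ⟨0,0⟩, ⟨0,0⟩, ⟨0,0⟩],
    ![⟨0,0⟩, ⟨0,0⟩, ⟨0,0⟩, ⟨0,0⟩, ⟨0,0⟩, ⟨0,0⟩, ⟨0,0⟩],
    ![⟨0,0⟩, ⟨0,0⟩, ⟨0,0⟩, ⟨0,0⟩, ⟨-6,0⟩, ⟨0,0⟩, ⟨0,0⟩],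
    ![⟨0,0⟩, ⟨0,0⟩, ⟨0,0⟩, ⟨0,0⟩, ⟨0,0⟩, ⟨0,0⟩, ⟨0,0⟩]],
  ![![⟨0,0⟩, ⟨0,0⟩, ⟨6,0⟩, ⟨0,0⟩, ⟨0,0⟩, ⟨0,0⟩, ⟨0,0⟩],
    ![⟨0,0⟩, ⟨0,0⟩, ⟨0,0⟩, ⟨0,0⟩, ⟨0,0⟩, ⟨0,0⟩, ⟨0,0⟩],
    ![⟨0,0⟩, ⟨0,0⟩, ⟨0,0⟩, ⟨0,0⟩, ⟨0,0⟩, ⟨0,0⟩, ⟨0,0⟩],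
    ![⟨0,0⟩, ⟨0,0⟩, ⟨0,0⟩, ⟨0,0⟩, ⟨0,0⟩, ⟨0,0⟩, ⟨0,0⟩],
    ![⟨0,0⟩, ⟨0,0⟩, ⟨0,0⟩, ⟨0,0⟩, ⟨0,0⟩, ⟨0,0⟩, ⟨-6,0⟩],
    ![⟨0,0⟩, ⟨0,0⟩, ⟨0,0⟩, ⟨0,0⟩, ⟨0,0⟩, ⟨0,0⟩, ⟨0,0⟩],
    ![⟨0,0⟩, ⟨0,0⟩, ⟨0,0⟩, ⟨0,0⟩, ⟨0,0⟩, ⟨0,0⟩, ⟨0,0⟩]],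
  ![![⟨0,0⟩, ⟨0,0⟩, ⟨0,0⟩, ⟨0,0⟩, ⟨0,0⟩, ⟨0,0⟩, ⟨0,0⟩],
    ![⟨0,0⟩, ⟨0,0⟩, ⟨6,0⟩, ⟨0,0⟩, ⟨0,0⟩, ⟨0,0⟩, ⟨0,0⟩],
    ![⟨0,0⟩, ⟨0,0⟩, ⟨0,0⟩, ⟨0,0⟩, ⟨0,0⟩, ⟨0,0⟩, ⟨0,0⟩],
    ![⟨0,0⟩, ⟨0,0⟩, ⟨0,0⟩, ⟨0,0⟩, ⟨0,0⟩, ⟨0,0⟩, ⟨0,0⟩],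
    ![⟨0,0⟩, ⟨0,0⟩, ⟨0,0⟩, ⟨0,0⟩, ⟨0,0⟩, ⟨-6,0⟩, ⟨0,0⟩],
    ![⟨0,0⟩, ⟨0,0⟩, ⟨0,0⟩, ⟨0,0⟩, ⟨0,0⟩, ⟨0,0⟩, ⟨0,0⟩],
    ![⟨0,0⟩, ⟨0,0⟩, ⟨0,0⟩, ⟨0,0⟩, ⟨0,0⟩, ⟨0,0⟩, ⟨0,0⟩]],
  ![![⟨0,0⟩, ⟨0,0⟩, ⟨0,0⟩, ⟨0,0⟩, ⟨0,0⟩, ⟨0,0⟩, ⟨0,0⟩],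
    ![⟨0,0⟩, ⟨0,0⟩, ⟨0,0⟩, ⟨0,0⟩, ⟨0,-2⟩, ⟨0,0⟩, ⟨0,0⟩],
    ![⟨0,0⟩, ⟨0,0⟩, ⟨0,0⟩, ⟨0,0⟩, ⟨0,0⟩, ⟨0,2⟩, ⟨0,0⟩],
    ![⟨4,0⟩, ⟨0,0⟩, ⟨0,0⟩, ⟨0,0⟩, ⟨0,0⟩, ⟨0,0⟩, ⟨0,0⟩],
    ![⟨0,0⟩, ⟨0,0⟩, ⟨0,0⟩, ⟨0,0⟩, ⟨0,0⟩, ⟨0,0⟩, ⟨0,0⟩],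
    ![⟨0,0⟩, ⟨0,0⟩, ⟨0,0⟩, ⟨0,0⟩, ⟨0,0⟩, ⟨0,0⟩, ⟨0,0⟩],
    ![⟨0,0⟩, ⟨0,0⟩, ⟨0,0⟩, ⟨-4,0⟩, ⟨0,0⟩, ⟨0,0⟩, ⟨0,0⟩]],
  ![![⟨0,0⟩, ⟨0,0⟩, ⟨0,0⟩, ⟨0,0⟩, ⟨0,2⟩, ⟨0,0⟩, ⟨0,0⟩],
    ![⟨0,0⟩, ⟨0,0⟩, ⟨0,0⟩, ⟨0,0⟩, ⟨0,0⟩, ⟨0,0⟩, ⟨0,0⟩],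
    ![⟨0,0⟩, ⟨0,0⟩, ⟨0,0⟩, ⟨0,0⟩, ⟨0,0⟩, ⟨0,0⟩, ⟨0,-2⟩],
    ![⟨0,0⟩, ⟨4,0⟩, ⟨0,0⟩, ⟨0,0⟩, ⟨0,0⟩, ⟨0,0⟩, ⟨0,0⟩],
    ![⟨0,0⟩, ⟨0,0⟩, ⟨0,0⟩, ⟨0,0⟩, ⟨0,0⟩, ⟨0,0⟩, ⟨0,0⟩],
    ![⟨0,0⟩, ⟨0,0⟩, ⟨0,0⟩, ⟨-4,0⟩, ⟨0,0⟩, ⟨0,0⟩, ⟨0,0⟩],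
    ![⟨0,0⟩, ⟨0,0⟩, ⟨0,0⟩, ⟨0,0⟩, ⟨0,0⟩, ⟨0,0⟩, ⟨0,0⟩]],
  ![![⟨0,0⟩, ⟨0,0⟩, ⟨0,0⟩, ⟨0,0⟩, ⟨0,0⟩, ⟨0,-2⟩, ⟨0,0⟩],
    ![⟨0,0⟩, ⟨0,0⟩, ⟨0,0⟩, ⟨0,0⟩, ⟨0,0⟩, ⟨0,0⟩, ⟨0,2⟩],
    ![⟨0,0⟩, ⟨0,0⟩, ⟨0,0⟩, ⟨0,0⟩, ⟨0,0⟩, ⟨0,0⟩, ⟨0,0⟩],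
    ![⟨0,0⟩, ⟨0,0⟩, ⟨4,0⟩, ⟨0,0⟩, ⟨0,0⟩, ⟨0,0⟩, ⟨0,0⟩],
    ![⟨0,0⟩, ⟨0,0⟩, ⟨0,0⟩, ⟨-4,0⟩, ⟨0,0⟩, ⟨0,0⟩, ⟨0,0⟩],
    ![⟨0,0⟩, ⟨0,0⟩, ⟨0,0⟩, ⟨0,0⟩, ⟨0,0⟩, ⟨0,0⟩, ⟨0,0⟩],
    ![⟨0,0⟩, ⟨0,0⟩, ⟨0,0⟩, ⟨0,0⟩, ⟨0,0⟩, ⟨0,0⟩, ⟨0,0⟩]],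
  ![![⟨0,0⟩, ⟨0,0⟩, ⟨0,0⟩, ⟨4,0⟩, ⟨0,0⟩, ⟨0,0⟩, ⟨0,0⟩],
    ![⟨0,0⟩, ⟨0,0⟩, ⟨0,0⟩, ⟨0,0⟩, ⟨0,0⟩, ⟨0,0⟩, ⟨0,0⟩],
    ![⟨0,0⟩, ⟨0,0⟩, ⟨0,0⟩, ⟨0,0⟩, ⟨0,0⟩, ⟨0,0⟩, ⟨0,0⟩],
    ![⟨0,0⟩, ⟨0,0⟩, ⟨0,0⟩, ⟨0,0⟩, ⟨0,0⟩, ⟨0,0⟩, ⟨-4,0⟩],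
    ![⟨0,0⟩, ⟨0,-2⟩, ⟨0,0⟩, ⟨0,0⟩, ⟨0,0⟩, ⟨0,0⟩, ⟨0,0⟩],
    ![⟨0,0⟩, ⟨0,0⟩, ⟨0,2⟩, ⟨0,0⟩, ⟨0,0⟩, ⟨0,0⟩, ⟨0,0⟩],
    ![⟨0,0⟩, ⟨0,0⟩, ⟨0,0⟩, ⟨0,0⟩, ⟨0,0⟩, ⟨0,0⟩, ⟨0,0⟩]],
  ![![⟨0,0⟩, ⟨0,0⟩, ⟨0,0⟩, ⟨0,0⟩, ⟨0,0⟩, ⟨0,0⟩, ⟨0,0⟩],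
    ![⟨0,0⟩, ⟨0,0⟩, ⟨0,0⟩, ⟨4,0⟩, ⟨0,0⟩, ⟨0,0⟩, ⟨0,0⟩],
    ![⟨0,0⟩, ⟨0,0⟩, ⟨0,0⟩, ⟨0,0⟩, ⟨0,0⟩, ⟨0,0⟩, ⟨0,0⟩],
    ![⟨0,0⟩, ⟨0,0⟩, ⟨0,0⟩, ⟨0,0⟩, ⟨0,0⟩, ⟨-4,0⟩, ⟨0,0⟩],
    ![⟨0,2⟩, ⟨0,0⟩, ⟨0,0⟩, ⟨0,0⟩, ⟨0,0⟩, ⟨0,0⟩, ⟨0,0⟩],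
    ![⟨0,0⟩, ⟨0,0⟩, ⟨0,0⟩, ⟨0,0⟩, ⟨0,0⟩, ⟨0,0⟩, ⟨0,0⟩],
    ![⟨0,0⟩, ⟨0,0⟩, ⟨0,-2⟩, ⟨0,0⟩, ⟨0,0⟩, ⟨0,0⟩, ⟨0,0⟩]],
  ![![⟨0,0⟩, ⟨0,0⟩, ⟨0,0⟩, ⟨0,0⟩, ⟨0,0⟩, ⟨0,0⟩, ⟨0,0⟩],
    ![⟨0,0⟩, ⟨0,0⟩, ⟨0,0⟩, ⟨0,0⟩, ⟨0,0⟩, ⟨0,0⟩, ⟨0,0⟩],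
    ![⟨0,0⟩, ⟨0,0⟩, ⟨0,0⟩, ⟨4,0⟩, ⟨0,0⟩, ⟨0,0⟩, ⟨0,0⟩],
    ![⟨0,0⟩, ⟨0,0⟩, ⟨0,0⟩, ⟨0,0⟩, ⟨-4,0⟩, ⟨0,0⟩, ⟨0,0⟩],
    ![⟨0,0⟩, ⟨0,0⟩, ⟨0,0⟩, ⟨0,0⟩, ⟨0,0⟩, ⟨0,0⟩, ⟨0,0⟩],
    ![⟨0,-2⟩, ⟨0,0⟩, ⟨0,0⟩, ⟨0,0⟩, ⟨0,0⟩, ⟨0,0⟩, ⟨0,0⟩],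
    ![⟨0,0⟩, ⟨0,2⟩, ⟨0,0⟩, ⟨0,0⟩, ⟨0,0⟩, ⟨0,0⟩, ⟨0,0⟩]]]

def betaT : Fin 7 → Fin 7 → Fin 7 → Z2 :=
  ![![![⟨0,0⟩, ⟨0,0⟩, ⟨0,0⟩, ⟨0,0⟩, ⟨0,0⟩, ⟨0,0⟩, ⟨0,0⟩],
    ![⟨0,0⟩, ⟨0,0⟩, ⟨0,1⟩, ⟨0,0⟩, ⟨0,0⟩, ⟨0,0⟩, ⟨0,0⟩],
    ![⟨0,0⟩, ⟨0,-1⟩, ⟨0,0⟩, ⟨0,0⟩, ⟨0,0⟩, ⟨0,0⟩, ⟨0,0⟩],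
    ![⟨0,0⟩, ⟨0,0⟩, ⟨0,0⟩, ⟨0,0⟩, ⟨0,0⟩, ⟨0,0⟩, ⟨1,0⟩],
    ![⟨0,0⟩, ⟨0,0⟩, ⟨0,0⟩, ⟨0,0⟩, ⟨0,0⟩, ⟨0,0⟩, ⟨0,0⟩],
    ![⟨0,0⟩, ⟨0,0⟩, ⟨0,0⟩, ⟨0,0⟩, ⟨0,0⟩, ⟨0,0⟩, ⟨0,0⟩],
    ![⟨0,0⟩, ⟨0,0⟩, ⟨0,0⟩, ⟨-1,0⟩, ⟨0,0⟩, ⟨0,0⟩, ⟨0,0⟩]],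
  ![![⟨0,0⟩, ⟨0,0⟩, ⟨0,-1⟩, ⟨0,0⟩, ⟨0,0⟩, ⟨0,0⟩, ⟨0,0⟩],
    ![⟨0,0⟩, ⟨0,0⟩, ⟨0,0⟩, ⟨0,0⟩, ⟨0,0⟩, ⟨0,0⟩, ⟨0,0⟩],
    ![⟨0,1⟩, ⟨0,0⟩, ⟨0,0⟩, ⟨0,0⟩, ⟨0,0⟩, ⟨0,0⟩, ⟨0,0⟩],
    ![⟨0,0⟩, ⟨0,0⟩, ⟨0,0⟩, ⟨0,0⟩, ⟨0,0⟩, ⟨1,0⟩, ⟨0,0⟩],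
    ![⟨0,0⟩, ⟨0,0⟩, ⟨0,0⟩, ⟨0,0⟩, ⟨0,0⟩, ⟨0,0⟩, ⟨0,0⟩],
    ![⟨0,0⟩, ⟨0,0⟩, ⟨0,0⟩, ⟨-1,0⟩, ⟨0,0⟩, ⟨0,0⟩, ⟨0,0⟩],
    ![⟨0,0⟩, ⟨0,0⟩, ⟨0,0⟩, ⟨0,0⟩, ⟨0,0⟩, ⟨0,0⟩, ⟨0,0⟩]],
  ![![⟨0,0⟩, ⟨0,1⟩, ⟨0,0⟩, ⟨0,0⟩, ⟨0,0⟩, ⟨0,0⟩, ⟨0,0⟩],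
    ![⟨0,-1⟩, ⟨0,0⟩, ⟨0,0⟩, ⟨0,0⟩, ⟨0,0⟩, ⟨0,0⟩, ⟨0,0⟩],
    ![⟨0,0⟩, ⟨0,0⟩, ⟨0,0⟩, ⟨0,0⟩, ⟨0,0⟩, ⟨0,0⟩, ⟨0,0⟩],
    ![⟨0,0⟩, ⟨0,0⟩, ⟨0,0⟩, ⟨0,0⟩, ⟨1,0⟩, ⟨0,0⟩, ⟨0,0⟩],
    ![⟨0,0⟩, ⟨0,0⟩, ⟨0,0⟩, ⟨-1,0⟩, ⟨0,0⟩, ⟨0,0⟩, ⟨0,0⟩],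
    ![⟨0,0⟩, ⟨0,0⟩, ⟨0,0⟩, ⟨0,0⟩, ⟨0,0⟩, ⟨0,0⟩, ⟨0,0⟩],
    ![⟨0,0⟩, ⟨0,0⟩, ⟨0,0⟩, ⟨0,0⟩, ⟨0,0⟩, ⟨0,0⟩, ⟨0,0⟩]],
  ![![⟨0,0⟩, ⟨0,0⟩, ⟨0,0⟩, ⟨0,0⟩, ⟨0,0⟩, ⟨0,0⟩, ⟨-1,0⟩],
    ![⟨0,0⟩, ⟨0,0⟩, ⟨0,0⟩, ⟨0,0⟩, ⟨0,0⟩, ⟨-1,0⟩, ⟨0,0⟩],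
    ![⟨0,0⟩, ⟨0,0⟩, ⟨0,0⟩, ⟨0,0⟩, ⟨-1,0⟩, ⟨0,0⟩, ⟨0,0⟩],
    ![⟨0,0⟩, ⟨0,0⟩, ⟨0,0⟩, ⟨0,0⟩, ⟨0,0⟩, ⟨0,0⟩, ⟨0,0⟩],
    ![⟨0,0⟩, ⟨0,0⟩, ⟨1,0⟩, ⟨0,0⟩, ⟨0,0⟩, ⟨0,0⟩, ⟨0,0⟩],
    ![⟨0,0⟩, ⟨1,0⟩, ⟨0,0⟩, ⟨0,0⟩, ⟨0,0⟩, ⟨0,0⟩, ⟨0,0⟩],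
    ![⟨1,0⟩, ⟨0,0⟩, ⟨0,0⟩, ⟨0,0⟩, ⟨0,0⟩, ⟨0,0⟩, ⟨0,0⟩]],
  ![![⟨0,0⟩, ⟨0,0⟩, ⟨0,0⟩, ⟨0,0⟩, ⟨0,0⟩, ⟨0,0⟩, ⟨0,0⟩],
    ![⟨0,0⟩, ⟨0,0⟩, ⟨0,0⟩, ⟨0,0⟩, ⟨0,0⟩, ⟨0,0⟩, ⟨0,0⟩],
    ![⟨0,0⟩, ⟨0,0⟩, ⟨0,0⟩, ⟨1,0⟩, ⟨0,0⟩, ⟨0,0⟩, ⟨0,0⟩],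
    ![⟨0,0⟩, ⟨0,0⟩, ⟨-1,0⟩, ⟨0,0⟩, ⟨0,0⟩, ⟨0,0⟩, ⟨0,0⟩],
    ![⟨0,0⟩, ⟨0,0⟩, ⟨0,0⟩, ⟨0,0⟩, ⟨0,0⟩, ⟨0,0⟩, ⟨0,0⟩],
    ![⟨0,0⟩, ⟨0,0⟩, ⟨0,0⟩, ⟨0,0⟩, ⟨0,0⟩, ⟨0,0⟩, ⟨0,1⟩],
    ![⟨0,0⟩, ⟨0,0⟩, ⟨0,0⟩, ⟨0,0⟩, ⟨0,0⟩, ⟨0,-1⟩, ⟨0,0⟩]],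
  ![![⟨0,0⟩, ⟨0,0⟩, ⟨0,0⟩, ⟨0,0⟩, ⟨0,0⟩, ⟨0,0⟩, ⟨0,0⟩],
    ![⟨0,0⟩, ⟨0,0⟩, ⟨0,0⟩, ⟨1,0⟩, ⟨0,0⟩, ⟨0,0⟩, ⟨0,0⟩],
    ![⟨0,0⟩, ⟨0,0⟩, ⟨0,0⟩, ⟨0,0⟩, ⟨0,0⟩, ⟨0,0⟩, ⟨0,0⟩],
    ![⟨0,0⟩, ⟨-1,0⟩, ⟨0,0⟩, ⟨0,0⟩, ⟨0,0⟩, ⟨0,0⟩, ⟨0,0⟩],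
    ![⟨0,0⟩, ⟨0,0⟩, ⟨0,0⟩, ⟨0,0⟩, ⟨0,0⟩, ⟨0,0⟩, ⟨0,-1⟩],
    ![⟨0,0⟩, ⟨0,0⟩, ⟨0,0⟩, ⟨0,0⟩, ⟨0,0⟩, ⟨0,0⟩, ⟨0,0⟩],
    ![⟨0,0⟩, ⟨0,0⟩, ⟨0,0⟩, ⟨0,0⟩, ⟨0,1⟩, ⟨0,0⟩, ⟨0,0⟩]],
  ![![⟨0,0⟩, ⟨0,0⟩, ⟨0,0⟩, ⟨1,0⟩, ⟨0,0⟩, ⟨0,0⟩, ⟨0,0⟩],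
    ![⟨0,0⟩, ⟨0,0⟩, ⟨0,0⟩, ⟨0,0⟩, ⟨0,0⟩, ⟨0,0⟩, ⟨0,0⟩],
    ![⟨0,0⟩, ⟨0,0⟩, ⟨0,0⟩, ⟨0,0⟩, ⟨0,0⟩, ⟨0,0⟩, ⟨0,0⟩],
    ![⟨-1,0⟩, ⟨0,0⟩, ⟨0,0⟩, ⟨0,0⟩, ⟨0,0⟩, ⟨0,0⟩, ⟨0,0⟩],
    ![⟨0,0⟩, ⟨0,0⟩, ⟨0,0⟩, ⟨0,0⟩, ⟨0,0⟩, ⟨0,1⟩, ⟨0,0⟩],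
    ![⟨0,0⟩, ⟨0,0⟩, ⟨0,0⟩, ⟨0,0⟩, ⟨0,-1⟩, ⟨0,0⟩, ⟨0,0⟩],
    ![⟨0,0⟩, ⟨0,0⟩, ⟨0,0⟩, ⟨0,0⟩, ⟨0,0⟩, ⟨0,0⟩, ⟨0,0⟩]]]


def TG : Fin 14 → Fin 14 → Z2 :=
  ![![⟨16,0⟩, ⟨-8,0⟩, ⟨0,0⟩, ⟨0,0⟩, ⟨0,0⟩, ⟨0,0⟩, ⟨0,0⟩, ⟨0,0⟩, ⟨0,0⟩, ⟨0,0⟩, ⟨0,0⟩, ⟨0,0⟩, ⟨0,0⟩, ⟨0,0⟩],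
  ![⟨-8,0⟩, ⟨16,0⟩, ⟨0,0⟩, ⟨0,0⟩, ⟨0,0⟩, ⟨0,0⟩, ⟨0,0⟩, ⟨0,0⟩, ⟨0,0⟩, ⟨0,0⟩, ⟨0,0⟩, ⟨0,0⟩, ⟨0,0⟩, ⟨0,0⟩],
  ![⟨0,0⟩, ⟨0,0⟩, ⟨0,0⟩, ⟨0,0⟩, ⟨8,0⟩, ⟨0,0⟩, ⟨0,0⟩, ⟨0,0⟩, ⟨0,0⟩, ⟨0,0⟩, ⟨0,0⟩, ⟨0,0⟩, ⟨0,0⟩, ⟨0,0⟩],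
  ![⟨0,0⟩, ⟨0,0⟩, ⟨0,0⟩, ⟨0,0⟩, ⟨0,0⟩, ⟨0,0⟩, ⟨8,0⟩, ⟨0,0⟩, ⟨0,0⟩, ⟨0,0⟩, ⟨0,0⟩, ⟨0,0⟩, ⟨0,0⟩, ⟨0,0⟩],
  ![⟨0,0⟩, ⟨0,0⟩, ⟨8,0⟩, ⟨0,0⟩, ⟨0,0⟩, ⟨0,0⟩, ⟨0,0⟩, ⟨0,0⟩, ⟨0,0⟩, ⟨0,0⟩, ⟨0,0⟩, ⟨0,0⟩, ⟨0,0⟩, ⟨0,0⟩],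
  ![⟨0,0⟩, ⟨0,0⟩, ⟨0,0⟩, ⟨0,0⟩, ⟨0,0⟩, ⟨0,0⟩, ⟨0,0⟩, ⟨8,0⟩, ⟨0,0⟩, ⟨0,0⟩, ⟨0,0⟩, ⟨0,0⟩, ⟨0,0⟩, ⟨0,0⟩],
  ![⟨0,0⟩, ⟨0,0⟩, ⟨0,0⟩, ⟨8,0⟩, ⟨0,0⟩, ⟨0,0⟩, ⟨0,0⟩, ⟨0,0⟩, ⟨0,0⟩, ⟨0,0⟩, ⟨0,0⟩, ⟨0,0⟩, ⟨0,0⟩, ⟨0,0⟩],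
  ![⟨0,0⟩, ⟨0,0⟩, ⟨0,0⟩, ⟨0,0⟩, ⟨0,0⟩, ⟨8,0⟩, ⟨0,0⟩, ⟨0,0⟩, ⟨0,0⟩, ⟨0,0⟩, ⟨0,0⟩, ⟨0,0⟩, ⟨0,0⟩, ⟨0,0⟩],
  ![⟨0,0⟩, ⟨0,0⟩, ⟨0,0⟩, ⟨0,0⟩, ⟨0,0⟩, ⟨0,0⟩, ⟨0,0⟩, ⟨0,0⟩, ⟨0,0⟩, ⟨0,0⟩, ⟨0,0⟩, ⟨12,0⟩, ⟨0,0⟩, ⟨0,0⟩],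
  ![⟨0,0⟩, ⟨0,0⟩, ⟨0,0⟩, ⟨0,0⟩, ⟨0,0⟩, ⟨0,0⟩, ⟨0,0⟩, ⟨0,0⟩, ⟨0,0⟩, ⟨0,0⟩, ⟨0,0⟩, ⟨0,0⟩, ⟨12,0⟩, ⟨0,0⟩],
  ![⟨0,0⟩, ⟨0,0⟩, ⟨0,0⟩, ⟨0,0⟩, ⟨0,0⟩, ⟨0,0⟩, ⟨0,0⟩, ⟨0,0⟩, ⟨0,0⟩, ⟨0,0⟩, ⟨0,0⟩, ⟨0,0⟩, ⟨0,0⟩, ⟨12,0⟩],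
  ![⟨0,0⟩, ⟨0,0⟩, ⟨0,0⟩, ⟨0,0⟩, ⟨0,0⟩, ⟨0,0⟩, ⟨0,0⟩, ⟨0,0⟩, ⟨12,0⟩, ⟨0,0⟩, ⟨0,0⟩, ⟨0,0⟩, ⟨0,0⟩, ⟨0,0⟩],
  ![⟨0,0⟩, ⟨0,0⟩, ⟨0,0⟩, ⟨0,0⟩, ⟨0,0⟩, ⟨0,0⟩, ⟨0,0⟩, ⟨0,0⟩, ⟨0,0⟩, ⟨12,0⟩, ⟨0,0⟩, ⟨0,0⟩, ⟨0,0⟩, ⟨0,0⟩],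
  ![⟨0,0⟩, ⟨0,0⟩, ⟨0,0⟩, ⟨0,0⟩, ⟨0,0⟩, ⟨0,0⟩, ⟨0,0⟩, ⟨0,0⟩, ⟨0,0⟩, ⟨0,0⟩, ⟨12,0⟩, ⟨0,0⟩, ⟨0,0⟩, ⟨0,0⟩]]


def rhsT (p q r s : Fin 7) : Z2 :=
  (if (p,q) = (r,s) then 1 else 0) + (if p = s ∧ q = r then 1 else 0)
    - c2 * (if pr7 p = q ∧ pr7 r = s then 1 else 0)
    - ∑ a : Fin 7, betaT p q a * betaT r s a

set_option maxRecDepth 100000 in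
theorem SXB_eq : ∀ i p r, SXB i p r = TSXB i p r := by
  letI : ∀ i p, DecidablePred fun r => SXB i p r = TSXB i p r := fun _ _ _ => instDecidableEqZ2 _ _
  decide

set_option maxRecDepth 100000 in
theorem beta_eq : ∀ i j k, betaCz i j k = betaT i j k := by decide

set_option maxRecDepth 100000 in
set_option maxHeartbeats 1000000 in
theorem gram_eq : ∀ i k, (∑ d : Fin 7, ∑ e : Fin 7, TSXB i d e * TSXB k e d) = TG i k := by decide

set_option maxRecDepth 100000 in
set_option maxHeartbeats 1000000 in
theorem reconT : ∀ k p r, (∑ i : Fin 14, TG i k * TSXD i p r) = c24 * TSXB k p r := by decide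

set_option maxRecDepth 100000 in
set_option maxHeartbeats 2000000 in
theorem keyT : ∀ p q r s : Fin 7,
    (∑ i : Fin 14, TSXB i p r * TSXD i q s) = c4 * rhsT p q r s := by decide

end G2aux

open G2aux

theorem sq2_mul_self : sq2 * sq2 = 2 := by
  unfold sq2; norm_cast; exact Real.mul_self_sqrt (by norm_num)

theorem sq2_inv : sq2⁻¹ = (2:ℂ)⁻¹ * sq2 := by
  refine inv_eq_of_mul_eq_one_right ?_
  rw [mul_comm, mul_assoc, sq2_mul_self]; norm_num

def phi : Z2 →+* ℂ where
  toFun x := (x.a : ℂ) + (x.b : ℂ) * sq2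
  map_one' := by simp
  map_zero' := by simp
  map_add' x y := by simp; ring
  map_mul' x y := by
    simp only [Z2.mul_a, Z2.mul_b]
    push_cast
    linear_combination (-(x.b : ℂ) * (y.b : ℂ)) * sq2_mul_self

@[simp] theorem phi_mk (a b : ℤ) : phi ⟨a,b⟩ = (a:ℂ) + (b:ℂ) * sq2 := rfl
@[simp] theorem phi_c2 : phi c2 = 2 := by simp [c2]
@[simp] theorem phi_c4 : phi c4 = 4 := by simp [c4]
@[simp] theorem phi_c24 : phi c24 = 24 := by simp [c24]
@[simp] theorem phi_sq2z : phi sq2z = sq2 := by simp [sq2z]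

theorem phi_std (i j p r : Fin 7) :
    phi (Matrix.single i j (1:Z2) p r) = Matrix.single i j (1:ℂ) p r := by
  simp [Matrix.single, apply_ite phi]

theorem phi_fmlz (i j p r : Fin 7) : phi (fmlz i j p r) = fml i j p r := by
  simp [fmlz, fml, Matrix.sub_apply, map_sub, phi_std]

theorem XBval0 : XB (⟨0, by omega⟩ : Fin 14) = fml 0 0 - fml 1 1 := rfl
theorem SXBval0 : SXB (⟨0, by omega⟩ : Fin 14) = c2 • (fmlz 0 0 - fmlz 1 1) := rfl
theorem XBval1 : XB (⟨1, by omega⟩ : Fin 14) = fml 1 1 - fml 2 2 := rfl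
theorem SXBval1 : SXB (⟨1, by omega⟩ : Fin 14) = c2 • (fmlz 1 1 - fmlz 2 2) := rfl
theorem XBval2 : XB (⟨2, by omega⟩ : Fin 14) = fml 0 1 := rfl
theorem SXBval2 : SXB (⟨2, by omega⟩ : Fin 14) = c2 • fmlz 0 1 := rfl
theorem XBval3 : XB (⟨3, by omega⟩ : Fin 14) = fml 0 2 := rfl
theorem SXBval3 : SXB (⟨3, by omega⟩ : Fin 14) = c2 • fmlz 0 2 := rfl
theorem XBval4 : XB (⟨4, by omega⟩ : Fin 14) = fml 1 0 := rfl
theorem SXBval4 : SXB (⟨4, by omega⟩ : Fin 14) = c2 • fmlz 1 0 := rfl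
theorem XBval5 : XB (⟨5, by omega⟩ : Fin 14) = fml 1 2 := rfl
theorem SXBval5 : SXB (⟨5, by omega⟩ : Fin 14) = c2 • fmlz 1 2 := rfl
theorem XBval6 : XB (⟨6, by omega⟩ : Fin 14) = fml 2 0 := rfl
theorem SXBval6 : SXB (⟨6, by omega⟩ : Fin 14) = c2 • fmlz 2 0 := rfl
theorem XBval7 : XB (⟨7, by omega⟩ : Fin 14) = fml 2 1 := rfl
theorem SXBval7 : SXB (⟨7, by omega⟩ : Fin 14) = c2 • fmlz 2 1 := rfl
theorem XBval8 : XB (⟨8, by omega⟩ : Fin 14) = fml 0 3 - sq2⁻¹ • fml 4 1 := rfl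
theorem SXBval8 : SXB (⟨8, by omega⟩ : Fin 14) = c2 • fmlz 0 3 - sq2z • fmlz 4 1 := rfl
theorem XBval9 : XB (⟨9, by omega⟩ : Fin 14) = fml 1 3 - sq2⁻¹ • fml 6 2 := rfl
theorem SXBval9 : SXB (⟨9, by omega⟩ : Fin 14) = c2 • fmlz 1 3 - sq2z • fmlz 6 2 := rfl
theorem XBval10 : XB (⟨10, by omega⟩ : Fin 14) = fml 2 3 - sq2⁻¹ • fml 5 0 := rfl
theorem SXBval10 : SXB (⟨10, by omega⟩ : Fin 14) = c2 • fmlz 2 3 - sq2z • fmlz 5 0 := rfl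
theorem XBval11 : XB (⟨11, by omega⟩ : Fin 14) = fml 3 0 - sq2⁻¹ • fml 1 4 := rfl
theorem SXBval11 : SXB (⟨11, by omega⟩ : Fin 14) = c2 • fmlz 3 0 - sq2z • fmlz 1 4 := rfl
theorem XBval12 : XB (⟨12, by omega⟩ : Fin 14) = fml 3 1 - sq2⁻¹ • fml 2 6 := rfl
theorem SXBval12 : SXB (⟨12, by omega⟩ : Fin 14) = c2 • fmlz 3 1 - sq2z • fmlz 2 6 := rfl
theorem XBval13 : XB (⟨13, by omega⟩ : Fin 14) = fml 3 2 - sq2⁻¹ • fml 0 5 := rfl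
theorem SXBval13 : SXB (⟨13, by omega⟩ : Fin 14) = c2 • fmlz 3 2 - sq2z • fmlz 0 5 := rfl

/-- Bridge: `XB` in `ℂ` vs the scaled integer table. -/
theorem hXB : ∀ (i : Fin 14) (p r : Fin 7), XB i p r = 2⁻¹ * phi (TSXB i p r) := by
  have key : ∀ (i : Fin 14) (p r : Fin 7), XB i p r = 2⁻¹ * phi (SXB i p r) := by
    intro i p r
    fin_cases i <;>
      simp only [XBval0, SXBval0, XBval1, SXBval1, XBval2, SXBval2, XBval3, SXBval3, XBval4, SXBval4, XBval5, SXBval5, XBval6, SXBval6, XBval7, SXBval7, XBval8, SXBval8, XBval9, SXBval9, XBval10, SXBval10, XBval11, SXBval11, XBval12, SXBval12, XBval13, SXBval13, Matrix.sub_apply, Matrix.smul_apply, smul_eq_mul, map_sub, map_mul,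
        phi_fmlz, sq2_inv, phi_c2, phi_sq2z] <;> ring
  intro i p r
  rw [key, SXB_eq]

theorem beta_link (i j k : Fin 7) : betaC i j k = phi (betaT i j k) := by
  rw [← beta_eq]
  simp [betaC, betaCz, w3, w3z, apply_ite phi, map_add, map_sub, map_mul]

theorem form_link (i k : Fin 14) : formG (XB i) (XB k) = 24⁻¹ * phi (TG i k) := by
  have h1 : formG (XB i) (XB k) = 6⁻¹ * ∑ d : Fin 7, ∑ e : Fin 7, XB i d e * XB k e d := by
    simp [formG, Matrix.trace, Matrix.diag, Matrix.mul_apply]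
  rw [h1, ← gram_eq i k]
  rw [map_sum]
  rw [Finset.mul_sum, Finset.mul_sum]
  congr 1
  funext d
  rw [map_sum, Finset.mul_sum, Finset.mul_sum]
  congr 1
  funext e
  rw [hXB i d e, hXB k e d, map_mul]
  ring

/-- The dual basis, transported to `ℂ`. -/
def Md (i : Fin 14) : M7 := Matrix.of fun p r => 2⁻¹ * phi (TSXD i p r)

@[simp] theorem Md_apply (i : Fin 14) (p r : Fin 7) : Md i p r = 2⁻¹ * phi (TSXD i p r) := rfl

/-- Reconstruction operator. -/
def Frec (Z : M7) : M7 := ∑ i : Fin 14, formG (XB i) Z • Md i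

theorem formG_zero (X : M7) : formG X 0 = 0 := by simp [formG]

theorem formG_add (X Y Z : M7) : formG X (Y + Z) = formG X Y + formG X Z := by
  simp [formG, Matrix.mul_add]; ring

theorem formG_smul (X : M7) (c : ℂ) (Y : M7) : formG X (c • Y) = c * formG X Y := by
  simp [formG, Matrix.mul_smul]; ring

theorem Frec_XB (k : Fin 14) : Frec (XB k) = XB k := by
  ext p r
  rw [show (Frec (XB k)) p r = ∑ i : Fin 14, formG (XB i) (XB k) * Md i p r by
    simp [Frec, Matrix.sum_apply, Matrix.smul_apply, smul_eq_mul]]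
  have h : ∀ i : Fin 14, formG (XB i) (XB k) * Md i p r
      = 48⁻¹ * phi (TG i k * TSXD i p r) := by
    intro i
    rw [form_link, Md_apply, map_mul]; ring
  rw [Finset.sum_congr rfl (fun i _ => h i), ← Finset.mul_sum, ← map_sum, reconT k p r,
    map_mul, phi_c24, hXB k p r]
  ring

theorem Frec_fix : ∀ Z ∈ Submodule.span ℂ (Set.range XB), Frec Z = Z := by
  intro Z hZ
  induction hZ using Submodule.span_induction with
  | mem x hx => obtain ⟨k, rfl⟩ := hx; exact Frec_XB k
  | zero => simp [Frec, formG_zero]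
  | add x y _ _ hx hy =>
      simp only [Frec, formG_add, add_smul, Finset.sum_add_distrib] at *
      rw [hx, hy]
  | smul c x _ hx =>
      simp only [Frec, formG_smul, mul_smul, ← Finset.smul_sum] at *
      rw [hx]

section withXlo

variable (Xlo : Fin 14 → M7)

theorem Xlo_eq (hmem : ∀ j, Xlo j ∈ Submodule.span ℂ (Set.range XB))
    (hdual : ∀ i j, formG (XB i) (Xlo j) = if i = j then 1 else 0) :
    ∀ j, Xlo j = Md j := by
  intro j
  have h := Frec_fix (Xlo j) (hmem j)
  rw [Frec] at h
  rw [← h]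
  rw [Finset.sum_congr rfl (fun i _ => by rw [hdual i j])]
  simp [ite_smul]

end withXlo

open Kronecker

theorem pr7_pr7 (i : Fin 7) : pr7 (pr7 i) = i := by
  simp only [pr7]; ext; simp; omega

theorem pr7_shift (a b : Fin 7) : (a = pr7 b) ↔ (pr7 a = b) := by
  constructor
  · rintro rfl; exact pr7_pr7 b
  · rintro rfl; exact (pr7_pr7 a).symm

theorem PP_apply (p q r s : Fin 7) : PP (p,q) (r,s) = if p = s ∧ q = r then 1 else 0 := by
  simp [ite_and, PP, Matrix.sum_apply, Matrix.kroneckerMap_apply,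
    Matrix.single_eq_of_single_single,
    Pi.single_apply, mul_ite, ite_mul, zero_mul, mul_zero, Finset.sum_ite_eq, Finset.sum_ite_eq',
    ite_apply, Pi.zero_apply, and_comm, eq_comm]

theorem QQ_apply (p q r s : Fin 7) :
    QQ (p,q) (r,s) = if pr7 p = q ∧ pr7 r = s then 1 else 0 := by
  simp [ite_and, pr7_shift, QQ, Matrix.sum_apply, Matrix.kroneckerMap_apply,
    Matrix.single_eq_of_single_single,
    Pi.single_apply, mul_ite, ite_mul, zero_mul, mul_zero, Finset.sum_ite_eq, Finset.sum_ite_eq',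
    ite_apply, Pi.zero_apply]

theorem TT_apply (p q r s : Fin 7) :
    TT (p,q) (r,s) = ∑ a : Fin 7, betaC p q a * betaC r s a := by
  simp [TT, Matrix.sum_apply, Matrix.smul_apply, Matrix.kroneckerMap_apply,
    Matrix.single_eq_of_single_single,
    Pi.single_apply, mul_ite, ite_mul, zero_mul, mul_zero, smul_eq_mul, mul_one,
    Finset.sum_ite_eq, Finset.sum_ite_eq', ite_apply, Pi.zero_apply, eq_comm]

open Kronecker in
/-- the element `Ω = Σᵢ Xⁱ ⊗ Xᵢ ∈ End(ℂ⁷) ⊗ End(ℂ⁷)` (where `X₁,…,X₁₄`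
is the basis of `g₂` dual to `X¹,…,X¹⁴` with respect to `⟨X,Y⟩ = (1/6) tr XY`)
satisfies `Ω = 1 + P − 2Q − T`. -/
theorem omega_eq_one_add_P_sub_two_Q_sub_T
    (Xlo : Fin 14 → M7)
    (hmem : ∀ j, Xlo j ∈ Submodule.span ℂ (Set.range XB))
    (hdual : ∀ i j, formG (XB i) (Xlo j) = if i = j then 1 else 0) :
    (∑ i : Fin 14, XB i ⊗ₖ Xlo i) = 1 + PP - (2 : ℂ) • QQ - TT := by
  have hX := Xlo_eq Xlo hmem hdual
  ext ⟨p, q⟩ ⟨r, s⟩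
  have lhs : (∑ i : Fin 14, XB i ⊗ₖ Xlo i) (p,q) (r,s)
      = phi (rhsT p q r s) := by
    rw [show (∑ i : Fin 14, XB i ⊗ₖ Xlo i) (p,q) (r,s)
        = ∑ i : Fin 14, XB i p r * Xlo i q s by
      simp [Matrix.sum_apply, Matrix.kroneckerMap_apply]]
    have h : ∀ i : Fin 14, XB i p r * Xlo i q s = 4⁻¹ * phi (TSXB i p r * TSXD i q s) := by
      intro i
      rw [hX i, hXB i p r, Md_apply, map_mul]; ring
    rw [Finset.sum_congr rfl (fun i _ => h i), ← Finset.mul_sum, ← map_sum, keyT p q r s,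
      map_mul, phi_c4]
    ring
  rw [lhs]
  rw [Matrix.sub_apply, Matrix.sub_apply, Matrix.add_apply, Matrix.smul_apply,
    Matrix.one_apply, PP_apply, QQ_apply, TT_apply, rhsT,
    map_sub, map_sub, map_add, map_mul, map_sum]
  simp only [apply_ite phi, map_one, map_zero, phi_c2, smul_eq_mul, map_mul, ← beta_link]
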